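/- Let Γ be a countable group acting on a set X such that every point stabilizer is finite and the action has only finitely many orbits. Then there exist functions |·|_X : X → [0,∞) and ℓ : Γ → [0,∞) such that: ℓ(1) = 0; ℓ(g⁻¹) = ℓ(g) for all g; ℓ(gh) ≤ ℓ(g) + ℓ(h) for all g, h; the set {g ∈ Γ : ℓ(g) ≤ R} is finite for every R > 0; |g·x|_X ≤ ℓ(g) + |x|_X for all g ∈ Γ and x ∈ X; and the set {x ∈ X : |x|_X ≤ R} is finite for every R > 0. -/

import Mathlib

open MulAction

/-- A proper symmetric weight function on a countable group. -/
lemma exists_weight (Γ : Type*) [Group Γ] [Countable Γ] :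
    ∃ w : Γ → ℝ, w 1 = 0 ∧ (∀ g, 0 ≤ w g) ∧ (∀ g, w g⁻¹ = w g) ∧
      (∀ g, g ≠ 1 → 1 ≤ w g) ∧ (∀ R : ℝ, {g : Γ | w g ≤ R}.Finite) := by
  classical
  obtain ⟨e, he⟩ := exists_injective_nat Γ
  refine ⟨fun g => if g = 1 then 0 else (e g + e g⁻¹ + 1 : ℝ), by simp, ?_, ?_, ?_, ?_⟩
  · intro g
    by_cases h : g = 1 <;> simp [h] <;> positivity
  · intro g
    by_cases h : g = 1
    · simp [h]
    · have h' : g⁻¹ ≠ 1 := by simpa using h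
      simp only [if_neg h, if_neg h', inv_inv]
      ring
  · intro g hg
    simp only [if_neg hg]
    have : (0:ℝ) ≤ e g := by positivity
    have : (0:ℝ) ≤ e g⁻¹ := by positivity
    linarith
  · intro R
    have hfin : {k : ℕ | (k : ℝ) ≤ R}.Finite := by
      apply (Set.finite_Iic (⌊R⌋₊)).subset
      intro k hk
      exact Nat.le_floor hk
    have : {g : Γ | (if g = 1 then 0 else (e g + e g⁻¹ + 1 : ℝ)) ≤ R} ⊆
        insert 1 (e ⁻¹' {k : ℕ | (k : ℝ) ≤ R}) := by
      intro g hg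
      by_cases h : g = 1
      · exact Set.mem_insert_iff.2 (Or.inl h)
      · refine Set.mem_insert_iff.2 (Or.inr ?_)
        simp only [Set.mem_setOf_eq, if_neg h] at hg
        have h1 : (0:ℝ) ≤ e g⁻¹ := by positivity
        simp only [Set.mem_preimage, Set.mem_setOf_eq]
        linarith
    exact ((hfin.preimage (he.injOn)).insert 1).subset this

lemma length_le_sum_of_one_le {Γ : Type*} (w : Γ → ℝ) :
    ∀ L : List Γ, (∀ x ∈ L, 1 ≤ w x) → (L.length : ℝ) ≤ (L.map w).sum
  | [], _ => by simp
  | a :: L, h => by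
    simp only [List.length_cons, List.map_cons, List.sum_cons, Nat.cast_succ]
    have h1 := h a (by simp)
    have h2 := length_le_sum_of_one_le w L (fun x hx => h x (by simp [hx]))
    linarith

lemma prod_filter_ne_one {Γ : Type*} [Group Γ] [DecidableEq Γ] :
    ∀ L : List Γ, (L.filter (fun x => x ≠ 1)).prod = L.prod
  | [] => rfl
  | a :: L => by
    have ih := prod_filter_ne_one L
    by_cases h : a = 1 <;> simp_all [List.filter_cons]

lemma finite_bounded_lists {Γ : Type*} {T : Set Γ} (hT : T.Finite) (n : ℕ) :
    {L : List Γ | L.length ≤ n ∧ ∀ x ∈ L, x ∈ T}.Finite := by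
  have : Finite ↥T := hT.to_subtype
  have h1 : {M : List ↥T | M.length ≤ n}.Finite := List.finite_length_le ↥T n
  have h2 := h1.image (List.map (Subtype.val : ↥T → Γ))
  apply h2.subset
  rintro L ⟨hlen, hmem⟩
  refine ⟨L.attach.map fun x => (⟨x.1, hmem x.1 x.2⟩ : ↥T), by simpa using hlen, ?_⟩
  simp [List.map_map, Function.comp]

/-- The word-length function associated to a weight function. -/
lemma exists_proper_length (Γ : Type*) [Group Γ] [Countable Γ] :
    ∃ l : Γ → ℝ, (∀ g, 0 ≤ l g) ∧ l 1 = 0 ∧ (∀ g : Γ, l g⁻¹ = l g) ∧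
      (∀ g h : Γ, l (g * h) ≤ l g + l h) ∧ (∀ R : ℝ, {g : Γ | l g ≤ R}.Finite) := by
  classical
  obtain ⟨w, hw1, hw0, hwsym, hwge, hwfin⟩ := exists_weight Γ
  set S : Γ → Set ℝ := fun g => {r | ∃ L : List Γ, L.prod = g ∧ (L.map w).sum = r} with hS
  have hSne : ∀ g, (S g).Nonempty := fun g => ⟨w g, [g], by simp⟩
  have hSnonneg : ∀ g, ∀ r ∈ S g, 0 ≤ r := by
    rintro g r ⟨L, -, rfl⟩
    exact List.sum_nonneg (by rintro x hx; obtain ⟨y, -, rfl⟩ := List.mem_map.1 hx; exact hw0 y)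
  have hSbdd : ∀ g, BddBelow (S g) := fun g => ⟨0, fun r hr => hSnonneg g r hr⟩
  set l : Γ → ℝ := fun g => sInf (S g) with hl
  have hlnonneg : ∀ g, 0 ≤ l g := fun g => le_csInf (hSne g) (hSnonneg g)
  have hlle : ∀ g, ∀ r ∈ S g, l g ≤ r := fun g r hr => csInf_le (hSbdd g) hr
  have hmono : ∀ g : Γ, S g ⊆ S g⁻¹ := by
    rintro g r ⟨L, rfl, rfl⟩
    refine ⟨(L.map fun x => x⁻¹).reverse, (List.prod_inv_reverse L).symm, ?_⟩
    rw [List.map_reverse, List.sum_reverse, List.map_map]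
    congr 1
    exact List.map_congr_left fun x _ => hwsym x
  have hSsym : ∀ g : Γ, S g⁻¹ = S g := fun g =>
    le_antisymm (by simpa using hmono g⁻¹) (hmono g)
  refine ⟨l, hlnonneg, ?_, ?_, ?_, ?_⟩
  · exact le_antisymm (hlle 1 0 ⟨[], by simp, by simp⟩) (hlnonneg 1)
  · intro g; exact congrArg sInf (hSsym g)
  · intro g h
    have key : ∀ a ∈ S g, ∀ b ∈ S h, l (g * h) ≤ a + b := by
      rintro a ⟨L₁, rfl, rfl⟩ b ⟨L₂, rfl, rfl⟩
      exact hlle _ _ ⟨L₁ ++ L₂, by simp, by simp⟩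
    have h1 : l (g * h) - l g ≤ l h := by
      refine le_csInf (hSne h) fun b hb => ?_
      rw [sub_le_iff_le_add, add_comm]
      refine (sub_le_iff_le_add.1 ?_)
      · refine le_csInf (hSne g) fun a ha => sub_le_iff_le_add.2 ?_
        have := key a ha b hb
        linarith
    linarith
  · intro R
    set n : ℕ := ⌈R⌉₊ + 1 with hn
    set T : Set Γ := {s : Γ | w s ≤ R + 1} with hTdef
    have hT : T.Finite := hwfin (R + 1)
    have hfin := (finite_bounded_lists hT n).image List.prod
    apply hfin.subset
    intro g hg
    have h1 : l g < R + 1 := lt_of_le_of_lt hg (by linarith)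
    obtain ⟨r, hrS, hr⟩ := exists_lt_of_csInf_lt (hSne g) h1
    obtain ⟨L, hLprod, hLsum⟩ := hrS
    set L' : List Γ := L.filter (fun x => x ≠ 1) with hL'
    have hsub : List.Sublist (L'.map w) (L.map w) := (List.filter_sublist : List.Sublist (L.filter (fun x => x ≠ 1)) L).map w
    have hsum' : (L'.map w).sum ≤ (L.map w).sum :=
      List.Sublist.sum_le_sum hsub
        (by rintro a ha; obtain ⟨y, -, rfl⟩ := List.mem_map.1 ha; exact hw0 y)
    have hsumlt : (L'.map w).sum < R + 1 := by rw [hLsum] at hsum'; linarith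
    have hne : ∀ x ∈ L', x ≠ 1 := fun x hx => by
      simpa using List.of_mem_filter hx
    have hge1 : ∀ x ∈ L', 1 ≤ w x := fun x hx => hwge x (hne x hx)
    have hlen : L'.length ≤ n := by
      have := length_le_sum_of_one_le w L' hge1
      have h2 : (L'.length : ℝ) < R + 1 := lt_of_le_of_lt this hsumlt
      have h3 : (L'.length : ℝ) < (⌈R⌉₊ : ℝ) + 1 :=
        lt_of_lt_of_le h2 (by have := Nat.le_ceil R; linarith)
      have h4 : L'.length < ⌈R⌉₊ + 1 := by exact_mod_cast h3
      omega
    have hmemT : ∀ x ∈ L', x ∈ T := by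
      intro x hx
      have hxw : w x ≤ (L'.map w).sum :=
        List.single_le_sum
          (by rintro a ha; obtain ⟨y, -, rfl⟩ := List.mem_map.1 ha; exact hw0 y)
          _ (List.mem_map_of_mem (f := w) hx)
      exact le_of_lt (lt_of_le_of_lt hxw hsumlt)
    exact ⟨L', ⟨hlen, hmemT⟩, by rw [prod_filter_ne_one L] at *; exact hLprod⟩


/-- For a countable group `Γ` acting on a set `X` with finite stabilizers and finitely many
orbits, there exist a function `|·|_X : X → [0,∞)` and a proper symmetric length function
`ℓ : Γ → [0,∞)` such that `|g • x|_X ≤ ℓ g + |x|_X` and all sublevel sets of `|·|_X`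
are finite. -/
theorem exists_length_functions {Γ X : Type*} [Group Γ] [Countable Γ] [MulAction Γ X]
    (hstab : ∀ x : X, {g : Γ | g • x = x}.Finite)
    (horb : Finite (MulAction.orbitRel.Quotient Γ X)) :
    ∃ (nX : X → ℝ) (l : Γ → ℝ),
      (∀ x, 0 ≤ nX x) ∧
      (∀ g, 0 ≤ l g) ∧
      l 1 = 0 ∧
      (∀ g : Γ, l g⁻¹ = l g) ∧
      (∀ g h : Γ, l (g * h) ≤ l g + l h) ∧
      (∀ R : ℝ, 0 < R → {g : Γ | l g ≤ R}.Finite) ∧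
      (∀ (g : Γ) (x : X), nX (g • x) ≤ l g + nX x) ∧
      (∀ R : ℝ, 0 < R → {x : X | nX x ≤ R}.Finite) := by
  classical
  obtain ⟨l, hl0, hl1, hlsym, hlsub, hlfin⟩ := exists_proper_length Γ
  set rep : X → X := fun x =>
    (Quotient.mk'' x : MulAction.orbitRel.Quotient Γ X).out with hrep
  have hrepx : ∀ x : X, ∃ g : Γ, g • rep x = x := by
    intro x
    have h := Quotient.mk_out (s := MulAction.orbitRel Γ X) x
    have h2 : (MulAction.orbitRel Γ X) x (rep x) :=
      Quotient.exact (Quotient.out_eq _).symm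
    rw [MulAction.orbitRel_apply] at h2
    obtain ⟨g, hg⟩ := h2
    exact ⟨g, hg⟩
  have hrepsmul : ∀ (g : Γ) (x : X), rep (g • x) = rep x := by
    intro g x
    have : (Quotient.mk'' (g • x) : MulAction.orbitRel.Quotient Γ X) = Quotient.mk'' x :=
      Quotient.sound (by
        show (MulAction.orbitRel Γ X) (g • x) x
        rw [MulAction.orbitRel_apply]; exact ⟨g, rfl⟩)
    simp only [hrep, this]
  set T : X → Set ℝ := fun x => {r | ∃ h : Γ, h • rep x = x ∧ l h = r} with hT
  have hTne : ∀ x, (T x).Nonempty := by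
    intro x
    obtain ⟨g, hg⟩ := hrepx x
    exact ⟨l g, g, hg, rfl⟩
  have hTnonneg : ∀ x, ∀ r ∈ T x, 0 ≤ r := by
    rintro x r ⟨h, -, rfl⟩; exact hl0 h
  have hTbdd : ∀ x, BddBelow (T x) := fun x => ⟨0, fun r hr => hTnonneg x r hr⟩
  set nX : X → ℝ := fun x => sInf (T x) with hnX
  have hnX0 : ∀ x, 0 ≤ nX x := fun x => le_csInf (hTne x) (hTnonneg x)
  refine ⟨nX, l, hnX0, hl0, hl1, hlsym, hlsub, fun R _ => hlfin R, ?_, ?_⟩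
  · intro g x
    have key : ∀ r ∈ T x, nX (g • x) ≤ l g + r := by
      rintro r ⟨h, hh, rfl⟩
      have hmem : l (g * h) ∈ T (g • x) :=
        ⟨g * h, by rw [hrepsmul g x, mul_smul, hh], rfl⟩
      exact le_trans (csInf_le (hTbdd _) hmem) (hlsub g h)
    have : nX (g • x) - l g ≤ nX x :=
      le_csInf (hTne x) fun r hr => by have := key r hr; linarith
    linarith
  · intro R hR
    have hsub : {x : X | nX x ≤ R} ⊆
        ⋃ q : MulAction.orbitRel.Quotient Γ X,
          (fun g : Γ => g • q.out) '' {g : Γ | l g ≤ R + 1} := by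
      intro x hx
      have h1 : nX x < R + 1 := lt_of_le_of_lt hx (by linarith)
      obtain ⟨r, ⟨h, hh, rfl⟩, hr⟩ := exists_lt_of_csInf_lt (hTne x) h1
      exact Set.mem_iUnion.2 ⟨Quotient.mk'' x, h, le_of_lt hr, hh⟩
    exact (Set.finite_iUnion fun q => (hlfin (R + 1)).image _).subset hsub
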